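/- Let $T$ be an $n$-dimensional LFMO random vector with Laplace exponent $\psi$ and let $T_{m:n}$ be its $m$-th increasing order statistic. Then for all $m = 1,\dots,n$ and $t \ge 0$, $\mathbb{P}(T_{m:n} > t) = \sum_{k=n-m+1}^{n} e^{-\psi(k) t} \binom{n}{k} \binom{k-1}{n-m} (-1)^{k-n+m-1}$. -/

import Mathlib

open Filter MeasureTheory ProbabilityTheory NNReal ENNReal Finset

lemma comb_zero (a N : ℕ) (h : a < N) :
    ∑ j ∈ Finset.Icc a N, (-1:ℝ)^j * (j.choose a) * (N.choose j) = 0 := by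
  have key : ∀ j ∈ Finset.Icc a N, (-1:ℝ)^j * (j.choose a) * (N.choose j)
      = (N.choose a : ℝ) * ((-1:ℝ)^j * ((N-a).choose (j-a))) := by
    intro j hj
    simp only [Finset.mem_Icc] at hj
    have := Nat.choose_mul (n := N) hj.1  -- N.choose j * j.choose a = N.choose a * (N-a).choose (j-a)
    have h2 : (N.choose j : ℝ) * (j.choose a) = (N.choose a : ℝ) * ((N-a).choose (j-a)) := by
      exact_mod_cast congrArg (Nat.cast : ℕ → ℝ) this
    calc (-1:ℝ)^j * (j.choose a) * (N.choose j)
        = ((N.choose j:ℝ) * (j.choose a)) * (-1)^j := by ring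
      _ = ((N.choose a:ℝ) * ((N-a).choose (j-a))) * (-1)^j := by rw [h2]
      _ = (N.choose a : ℝ) * ((-1)^j * ((N-a).choose (j-a))) := by ring
  rw [Finset.sum_congr rfl key, ← Finset.mul_sum]
  have : ∑ j ∈ Finset.Icc a N, (-1:ℝ)^j * ((N-a).choose (j-a)) = 0 := by
    rw [show Finset.Icc a N = Finset.map (addLeftEmbedding a) (Finset.range (N - a + 1)) from ?_]
    · rw [Finset.sum_map]
      simp only [addLeftEmbedding_apply]
      have : ∑ i ∈ Finset.range (N - a + 1), (-1:ℝ)^(a + i) * ((N-a).choose (a + i - a))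
          = (-1:ℝ)^a * ∑ i ∈ Finset.range (N - a + 1), (-1:ℝ)^i * ((N-a).choose i) := by
        rw [Finset.mul_sum]
        refine Finset.sum_congr rfl fun i _ => ?_
        rw [pow_add, Nat.add_sub_cancel_left]; ring
      rw [this]
      have hz : ∑ i ∈ Finset.range (N - a + 1), (-1:ℝ)^i * ((N-a).choose i) = 0 := by
        have := Int.alternating_sum_range_choose_of_ne (n := N - a) (by omega)
        exact_mod_cast congrArg (Int.cast : ℤ → ℝ) this
      rw [hz, mul_zero]
    · ext x
      simp only [Finset.mem_Icc, Finset.mem_map, Finset.mem_range, addLeftEmbedding_apply]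
      constructor
      · rintro ⟨h1, h2⟩; exact ⟨x - a, by omega, by omega⟩
      · rintro ⟨i, hi, rfl⟩; omega
  rw [this, mul_zero]

lemma comb_one (r N : ℕ) (hr : 1 ≤ r) (h : r ≤ N) :
    ∑ k ∈ Finset.Icc r N, (-1:ℝ)^k * ((k-1).choose (r-1)) * (N.choose k) = (-1:ℝ)^r := by
  induction N, h using Nat.le_induction with
  | base =>
    rw [Finset.Icc_self, Finset.sum_singleton, Nat.choose_self, Nat.choose_self]
    simp
  | succ N hN ih =>
    have hsplit : ∀ k ∈ Finset.Icc r (N+1), (-1:ℝ)^k * ((k-1).choose (r-1)) * ((N+1).choose k)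
        = (-1:ℝ)^k * ((k-1).choose (r-1)) * (N.choose k)
          + (-1:ℝ)^k * ((k-1).choose (r-1)) * (N.choose (k-1)) := by
      intro k hk
      simp only [Finset.mem_Icc] at hk
      have hk1 : 1 ≤ k := le_trans hr hk.1
      have h3 : k = k - 1 + 1 := by omega
      have : (N+1).choose k = N.choose (k-1) + N.choose k := by
        conv_lhs => rw [h3]
        rw [Nat.choose_succ_succ', ← h3]
      rw [this]
      push_cast
      ring
    rw [Finset.sum_congr rfl hsplit, Finset.sum_add_distrib]
    have h1 : ∑ k ∈ Finset.Icc r (N+1), (-1:ℝ)^k * ((k-1).choose (r-1)) * (N.choose k)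
        = (-1:ℝ)^r := by
      rw [Finset.sum_Icc_succ_top (by omega : r ≤ N + 1), Nat.choose_succ_self,
        Nat.cast_zero, mul_zero, add_zero]
      exact ih
    have h2 : ∑ k ∈ Finset.Icc r (N+1), (-1:ℝ)^k * ((k-1).choose (r-1)) * (N.choose (k-1))
        = 0 := by
      have hmap : Finset.Icc r (N+1) = Finset.map (addRightEmbedding 1) (Finset.Icc (r-1) N) := by
        ext x
        simp only [Finset.mem_Icc, Finset.mem_map, addRightEmbedding_apply]
        constructor
        · rintro ⟨h1, h2⟩; exact ⟨x - 1, by omega, by omega⟩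
        · rintro ⟨j, hj, rfl⟩; omega
      rw [hmap, Finset.sum_map]
      simp only [addRightEmbedding_apply, Nat.add_sub_cancel]
      have : ∀ j ∈ Finset.Icc (r-1) N, (-1:ℝ)^(j+1) * (j.choose (r-1)) * (N.choose j)
          = -((-1:ℝ)^j * (j.choose (r-1)) * (N.choose j)) := by
        intro j _; rw [pow_succ]; ring
      rw [Finset.sum_congr rfl this, Finset.sum_neg_distrib,
        comb_zero (r-1) N (by omega), neg_zero]
    rw [h1, h2, add_zero]

lemma comb_main (r n N : ℕ) (hr : 1 ≤ r) (hrn : r ≤ n) (hN : N ≤ n) :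
    ∑ k ∈ Finset.Icc r n, (-1:ℝ)^k * ((k-1).choose (r-1)) * (N.choose k)
      = if r ≤ N then (-1:ℝ)^r else 0 := by
  by_cases h : r ≤ N
  · rw [if_pos h, ← comb_one r N hr h]
    refine (Finset.sum_subset (Finset.Icc_subset_Icc_right hN) fun k hk hk' => ?_).symm
    simp only [Finset.mem_Icc] at hk hk'
    rw [show N.choose k = 0 from Nat.choose_eq_zero_of_lt (by omega), Nat.cast_zero, mul_zero]
  · rw [if_neg h]
    refine Finset.sum_eq_zero fun k hk => ?_
    simp only [Finset.mem_Icc] at hk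
    rw [show N.choose k = 0 from Nat.choose_eq_zero_of_lt (by omega), Nat.cast_zero, mul_zero]

lemma upcross (S' : ℝ≥0 → ℝ) (hmono : Monotone S')
    (hrc : ∀ t : ℝ≥0, ContinuousWithinAt S' (Set.Ici t) t) (e : ℝ) (t : ℝ≥0) :
    (t : ℝ≥0∞) < sInf ((fun u : ℝ≥0 => (u : ℝ≥0∞)) '' {u | e ≤ S' u}) ↔ S' t < e := by
  constructor
  · intro h
    by_contra hle
    push_neg at hle
    have hmem : (t : ℝ≥0∞) ∈ (fun u : ℝ≥0 => (u : ℝ≥0∞)) '' {u | e ≤ S' u} := ⟨t, hle, rfl⟩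
    exact absurd (sInf_le hmem) (not_le.mpr h)
  · intro hlt
    have hmem : S' ⁻¹' Set.Iio e ∈ nhdsWithin t (Set.Ici t) := hrc t (Iio_mem_nhds hlt)
    obtain ⟨δ, hδ, hball⟩ := Metric.mem_nhdsWithin_iff.mp hmem
    set δ' : ℝ≥0 := Real.toNNReal (δ / 2) with hδ'def
    have hδ'pos : 0 < δ' := by
      rw [hδ'def]; exact Real.toNNReal_pos.mpr (by linarith)
    have key : ∀ u : ℝ≥0, e ≤ S' u → t + δ' ≤ u := by
      intro u hu
      by_contra hcon
      push_neg at hcon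
      rcases lt_or_ge u t with h1 | h1
      · exact absurd (le_trans hu (hmono h1.le)) (not_le.mpr hlt)
      · have hd : dist u t < δ := by
          rw [NNReal.dist_eq]
          have h2 : (u : ℝ) < (t : ℝ) + δ' := by exact_mod_cast hcon
          have h3 : (δ' : ℝ) ≤ δ / 2 :=
            le_of_eq (Real.coe_toNNReal _ (by linarith : (0:ℝ) ≤ δ / 2))
          have h4 : (t : ℝ) ≤ u := by exact_mod_cast h1
          rw [abs_of_nonneg (by linarith)]
          linarith
        have : u ∈ S' ⁻¹' Set.Iio e := hball ⟨hd, h1⟩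
        exact absurd hu (not_le.mpr this)
    have hb : ((t + δ' : ℝ≥0) : ℝ≥0∞) ≤
        sInf ((fun u : ℝ≥0 => (u : ℝ≥0∞)) '' {u | e ≤ S' u}) := by
      refine le_sInf ?_
      rintro v ⟨u, hu, rfl⟩
      exact ENNReal.coe_le_coe.mpr (key u hu)
    refine lt_of_lt_of_le ?_ hb
    exact_mod_cast (lt_add_iff_pos_right t).mpr hδ'pos

lemma ord_iff {n : ℕ} (T' : Fin n → ℝ≥0∞) (m : ℕ) (t : ℝ≥0∞) (ht : t ≠ ⊤) :
    t < sInf {u : ℝ≥0∞ | m ≤ (Finset.univ.filter (fun i => T' i ≤ u)).card}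
      ↔ (Finset.univ.filter (fun i => T' i ≤ t)).card < m := by
  set U := {u : ℝ≥0∞ | m ≤ (Finset.univ.filter (fun i => T' i ≤ u)).card} with hUdef
  have hup : ∀ u ∈ U, ∀ v, u ≤ v → v ∈ U := by
    intro u hu v huv
    refine le_trans hu (Finset.card_le_card ?_)
    intro i hi
    simp only [Finset.mem_filter] at hi ⊢
    exact ⟨hi.1, le_trans hi.2 huv⟩
  constructor
  · intro h
    by_contra hcon
    push_neg at hcon
    exact absurd (sInf_le (show t ∈ U from hcon)) (not_le.mpr h)
  · intro h
    rcases Set.eq_empty_or_nonempty U with hU | hU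
    · have : sInf U = ⊤ := by rw [hU]; exact sInf_empty
      rw [this]
      exact ht.lt_top
    · have hkey : sInf U ∈ U := by
        set a := sInf U with hadef
        set A := Finset.univ.filter (fun i => a < T' i) with hAdef
        have hch : ∀ i ∈ A, ∃ u, u ∈ U ∧ u < T' i := by
          intro i hi
          simp only [hAdef, Finset.mem_filter] at hi
          obtain ⟨u, hu, hlt⟩ := sInf_lt_iff.mp hi.2
          exact ⟨u, hu, hlt⟩
        choose! uu hu1 hu2 using hch
        by_cases hA : A.Nonempty
        · obtain ⟨i0, hi0, hmin⟩ := A.exists_min_image uu hA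
          have hv : uu i0 ∈ U := hu1 i0 hi0
          have hsub : Finset.univ.filter (fun i => T' i ≤ uu i0)
              ⊆ Finset.univ.filter (fun i => T' i ≤ a) := by
            intro i hi
            simp only [Finset.mem_filter] at hi ⊢
            refine ⟨hi.1, ?_⟩
            by_contra hc
            push_neg at hc
            have hiA : i ∈ A := by simp [hAdef, hc]
            exact absurd (lt_of_le_of_lt hi.2 (lt_of_le_of_lt (hmin i hiA) (hu2 i hiA)))
              (lt_irrefl _)
          exact le_trans hv (Finset.card_le_card hsub)
        · -- A empty: every T' i ≤ a
          obtain ⟨u0, hu0⟩ := hU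
          have hall : Finset.univ.filter (fun i => T' i ≤ a) = Finset.univ := by
            refine Finset.eq_univ_of_forall fun i => ?_
            simp only [Finset.mem_filter]
            refine ⟨Finset.mem_univ i, ?_⟩
            by_contra hc
            push_neg at hc
            exact hA ⟨i, by simp [hAdef, hc]⟩
          rw [hUdef]
          simp only [Set.mem_setOf_eq]
          rw [hall, Finset.card_univ, Fintype.card_fin]
          calc m ≤ (Finset.univ.filter (fun i => T' i ≤ u0)).card := hu0
            _ ≤ Finset.univ.card := Finset.card_le_card (Finset.filter_subset _ _)
            _ = n := by rw [Finset.card_univ, Fintype.card_fin]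
      refine lt_of_le_of_ne (le_sInf fun u hu => ?_) ?_
      · by_contra hc
        push_neg at hc
        exact absurd (hup u hu t hc.le) (by simpa [hUdef] using Nat.not_le.mpr h)
      · intro hc
        rw [hc] at h
        exact absurd hkey (by simpa [hUdef] using Nat.not_le.mpr h)

lemma stepA {Ω : Type*} [MeasurableSpace Ω] (μ : Measure Ω) [IsProbabilityMeasure μ] (n : ℕ)
    (g : Ω → ℝ) (hg : Measurable g) (hgpos : ∀ ω, 0 ≤ g ω)
    (ε : Fin n → Ω → ℝ) (hεmeas : ∀ i, Measurable (ε i))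
    (hεdist : ∀ i, ∀ x : ℝ, 0 ≤ x → μ {ω | x < ε i ω} = ENNReal.ofReal (Real.exp (-x)))
    (hεiid : iIndepFun ε μ)
    (hindepf : IndepFun (fun ω (i : Fin n) => ε i ω) g μ)
    (K : Finset (Fin n)) :
    μ (⋂ i ∈ K, {ω | g ω < ε i ω})
      = ∫⁻ ω, ENNReal.ofReal (Real.exp (-((K.card : ℝ) * g ω))) ∂μ := by
  set f : Ω → (Fin n → ℝ) := fun ω i => ε i ω with hfdef
  have hf : Measurable f := measurable_pi_iff.mpr hεmeas
  set C : Set (ℝ × (Fin n → ℝ)) := ⋂ i ∈ K, {p | p.1 < p.2 i} with hCdef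
  have hCmeas : MeasurableSet C :=
    MeasurableSet.biInter K.countable_toSet fun i _ =>
      measurableSet_lt measurable_fst ((measurable_pi_apply i).comp measurable_snd)
  have hpre : (fun ω => (g ω, f ω)) ⁻¹' C = ⋂ i ∈ K, {ω | g ω < ε i ω} := by
    ext ω; simp [hCdef, hfdef]
  have hmap : μ.map (fun ω => (g ω, f ω)) = (μ.map g).prod (μ.map f) :=
    (indepFun_iff_map_prod_eq_prod_map_map hg.aemeasurable hf.aemeasurable).1 hindepf.symm
  have hinner : ∀ s : ℝ, 0 ≤ s →
      μ (⋂ i ∈ K, {ω | s < ε i ω}) = ENNReal.ofReal (Real.exp (-((K.card : ℝ) * s))) := by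
    intro s hs
    have := hεiid.meas_biInter (S := K) (s := fun i => {ω | s < ε i ω})
      (fun i _ => ⟨Set.Ioi s, measurableSet_Ioi, by ext ω; simp⟩)
    rw [this]
    have : ∀ i ∈ K, μ {ω | s < ε i ω} = ENNReal.ofReal (Real.exp (-s)) := fun i _ =>
      hεdist i s hs
    rw [Finset.prod_congr rfl this, Finset.prod_const,
      ← ENNReal.ofReal_pow (Real.exp_nonneg _), ← Real.exp_nat_mul]
    ring_nf
  have hDmeas : ∀ s : ℝ, MeasurableSet (⋂ i ∈ K, {x : Fin n → ℝ | s < x i}) := fun s =>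
    MeasurableSet.biInter K.countable_toSet fun i _ =>
      measurableSet_lt measurable_const (measurable_pi_apply i)
  calc μ (⋂ i ∈ K, {ω | g ω < ε i ω})
      = μ.map (fun ω => (g ω, f ω)) C := by
        rw [Measure.map_apply (hg.prodMk hf) hCmeas, hpre]
    _ = ∫⁻ s, (μ.map f) (Prod.mk s ⁻¹' C) ∂(μ.map g) := by
        rw [hmap, Measure.prod_apply hCmeas]
    _ = ∫⁻ s, ENNReal.ofReal (Real.exp (-((K.card : ℝ) * s))) ∂(μ.map g) := by
        refine lintegral_congr_ae ?_
        have hae : ∀ᵐ s ∂(μ.map g), s ∈ Set.Ici (0:ℝ) :=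
          (ae_map_iff hg.aemeasurable measurableSet_Ici).2 (ae_of_all _ fun ω => hgpos ω)
        filter_upwards [hae] with s hs
        have hpre2 : Prod.mk s ⁻¹' C = ⋂ i ∈ K, {x : Fin n → ℝ | s < x i} := by
          ext x; simp [hCdef]
        rw [hpre2, Measure.map_apply hf (hDmeas s)]
        have : f ⁻¹' (⋂ i ∈ K, {x : Fin n → ℝ | s < x i}) = ⋂ i ∈ K, {ω | s < ε i ω} := by
          ext ω; simp [hfdef]
        rw [this, hinner s hs]
    _ = ∫⁻ ω, ENNReal.ofReal (Real.exp (-((K.card : ℝ) * g ω))) ∂μ := by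
        rw [lintegral_map ?_ hg]
        exact ((Real.continuous_exp.comp (by continuity)).measurable).ennreal_ofReal

lemma count_identity {α : Type*} [Fintype α] [DecidableEq α] (b : α → Prop) [DecidablePred b]
    (k : ℕ) :
    ∑ K ∈ Finset.powersetCard k (Finset.univ : Finset α), ∏ i ∈ K, (if b i then (1:ℝ) else 0)
      = (((Finset.univ.filter b).card.choose k : ℕ) : ℝ) := by
  have h1 : ∀ K : Finset α, ∏ i ∈ K, (if b i then (1:ℝ) else 0)
      = if K ⊆ Finset.univ.filter b then (1:ℝ) else 0 := by
    intro K
    by_cases h : K ⊆ Finset.univ.filter b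
    · rw [if_pos h]
      refine Finset.prod_eq_one fun i hi => ?_
      have := h hi
      simp only [Finset.mem_filter] at this
      rw [if_pos this.2]
    · rw [if_neg h]
      obtain ⟨i, hi, hbi⟩ : ∃ i ∈ K, ¬ b i := by
        by_contra hc
        push_neg at hc
        exact h fun i hi => by simp [Finset.mem_filter, hc i hi]
      exact Finset.prod_eq_zero hi (by rw [if_neg hbi])
  rw [Finset.sum_congr rfl fun K _ => h1 K, Finset.sum_boole]
  congr 1
  rw [show Finset.filter (fun K => K ⊆ Finset.univ.filter b)
        (Finset.powersetCard k (Finset.univ : Finset α))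
      = Finset.powersetCard k (Finset.univ.filter b) from ?_, Finset.card_powersetCard]
  ext K
  simp only [Finset.mem_filter, Finset.mem_powersetCard]
  constructor
  · rintro ⟨⟨-, hc⟩, hsub⟩; exact ⟨hsub, hc⟩
  · rintro ⟨hsub, hc⟩; exact ⟨⟨Finset.subset_univ K, hc⟩, hsub⟩

lemma indicator_identity {n : ℕ} (b : Fin n → Prop) [DecidablePred b] (r : ℕ)
    (hr : 1 ≤ r) (hrn : r ≤ n) :
    (if r ≤ (Finset.univ.filter b).card then (1:ℝ) else 0)
      = ∑ k ∈ Finset.Icc r n, ((-1:ℝ)^(k+r) * (((k-1).choose (r-1) : ℕ) : ℝ)) *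
          ∑ K ∈ Finset.powersetCard k (Finset.univ : Finset (Fin n)),
            ∏ i ∈ K, (if b i then (1:ℝ) else 0) := by
  set N := (Finset.univ.filter b).card with hN
  have hNn : N ≤ n := by
    calc N ≤ (Finset.univ : Finset (Fin n)).card := Finset.card_le_card (Finset.filter_subset _ _)
      _ = n := by rw [Finset.card_univ, Fintype.card_fin]
  have : ∀ k ∈ Finset.Icc r n, ((-1:ℝ)^(k+r) * (((k-1).choose (r-1) : ℕ) : ℝ)) *
          ∑ K ∈ Finset.powersetCard k (Finset.univ : Finset (Fin n)),
            ∏ i ∈ K, (if b i then (1:ℝ) else 0)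
      = (-1:ℝ)^r * ((-1:ℝ)^k * (((k-1).choose (r-1) : ℕ) : ℝ) * ((N.choose k : ℕ) : ℝ)) := by
    intro k _
    rw [count_identity, pow_add]
    ring
  rw [Finset.sum_congr rfl this, ← Finset.mul_sum, comb_main r n N hr hrn hNn]
  by_cases h : r ≤ N
  · rw [if_pos h, if_pos h, ← pow_add, ← two_mul, pow_mul]
    norm_num
  · rw [if_neg h, if_neg h, mul_zero]

lemma neg_one_pow_congr_nat (a b : ℕ) (h : a % 2 = b % 2) : (-1:ℝ)^a = (-1:ℝ)^b := by
  rcases Nat.even_or_odd a with ha | ha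
  · have hb : Even b := by
      rcases ha with ⟨c, hc⟩
      exact (Nat.even_iff).mpr (by omega)
    rw [ha.neg_one_pow, hb.neg_one_pow]
  · have hb : Odd b := by
      rcases ha with ⟨c, hc⟩
      exact (Nat.odd_iff).mpr (by omega)
    rw [ha.neg_one_pow, hb.neg_one_pow]

/-- Marginal tail distribution of the `m`-th increasing order statistic of an
`n`-dimensional Lévy-frailty Marshall-Olkin vector with Laplace exponent `ψ`:
`P(T_{m:n} > t) = ∑_{k=n-m+1}^{n} e^{-ψ(k) t} C(n,k) C(k-1,n-m) (-1)^{k-n+m-1}`. -/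
theorem lfmo_stmt11 {Ω : Type*} [MeasurableSpace Ω] (μ : Measure Ω) [IsProbabilityMeasure μ]
    (n : ℕ) (hn : 0 < n)
    -- the Lévy subordinator: nondecreasing right-continuous paths starting at 0
    (S : ℝ≥0 → Ω → ℝ) (hSmeas : ∀ t, Measurable (S t))
    (hS0 : ∀ ω, S 0 ω = 0) (hSmono : ∀ ω, Monotone (fun t => S t ω))
    (hSrc : ∀ ω (t : ℝ≥0), ContinuousWithinAt (fun s => S s ω) (Set.Ici t) t)
    -- iid unit-rate exponential triggers, independent of `S`
    (ε : Fin n → Ω → ℝ) (hεmeas : ∀ i, Measurable (ε i))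
    (hεdist : ∀ i, ∀ x : ℝ, 0 ≤ x → μ {ω | x < ε i ω} = ENNReal.ofReal (Real.exp (-x)))
    (hεiid : iIndepFun ε μ)
    (hindep : Indep (⨆ i, MeasurableSpace.comap (ε i) inferInstance)
      (⨆ t : ℝ≥0, MeasurableSpace.comap (fun ω => S t ω) inferInstance) μ)
    -- the LFMO lifetimes: upcrossing times of the triggers (with `inf ∅ = ∞`)
    (T : Fin n → Ω → ℝ≥0∞)
    (hT : ∀ i ω, T i ω = sInf ((fun t : ℝ≥0 => (t : ℝ≥0∞)) '' {t | ε i ω ≤ S t ω}))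
    -- Laplace exponent: `E e^{-x S_t} = e^{-t ψ(x)}`
    (ψ : ℝ → ℝ)
    (hψ : ∀ (t : ℝ≥0) (x : ℝ), 0 < x →
      ∫ ω, Real.exp (-(x * S t ω)) ∂μ = Real.exp (-((t : ℝ) * ψ x)))
    -- the order statistics: `ordStat m ω` is the `m`-th smallest among `T_1 ω, …, T_n ω`
    (ordStat : ℕ → Ω → ℝ≥0∞)
    (hord : ∀ m ω, ordStat m ω =
      sInf {u : ℝ≥0∞ | m ≤ (Finset.univ.filter (fun i => T i ω ≤ u)).card}) :
    ∀ m : ℕ, 1 ≤ m → m ≤ n → ∀ t : ℝ≥0,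
      μ {ω | (t : ℝ≥0∞) < ordStat m ω} =
        ENNReal.ofReal (∑ k ∈ Finset.Icc (n - m + 1) n,
          Real.exp (-(ψ k * t)) * (n.choose k : ℝ) * ((k - 1).choose (n - m) : ℝ) *
            (-1 : ℝ) ^ (k + m - 1 - n)) := by
  intro m hm1 hmn t
  set r := n - m + 1 with hrdef
  have hr1 : 1 ≤ r := by omega
  have hrn : r ≤ n := by omega
  have hSpos : ∀ ω, 0 ≤ S t ω := fun ω => by
    have h := hSmono ω (show (0:ℝ≥0) ≤ t by positivity)
    simp only [hS0 ω] at h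
    simpa using h
  -- the per-index events
  set B : Fin n → Set Ω := fun i => {ω | S t ω < ε i ω} with hBdef
  have hBmeas : ∀ i, MeasurableSet (B i) := fun i => measurableSet_lt (hSmeas t) (hεmeas i)
  set N : Ω → ℕ := fun ω => (Finset.univ.filter (fun i => S t ω < ε i ω)).card with hNdef
  have hNn : ∀ ω, N ω ≤ n := fun ω => by
    calc N ω ≤ (Finset.univ : Finset (Fin n)).card :=
          Finset.card_le_card (Finset.filter_subset _ _)
      _ = n := by rw [Finset.card_univ, Fintype.card_fin]
  -- Step 1 : event identification
  have hset : {ω | (t : ℝ≥0∞) < ordStat m ω} = {ω | r ≤ N ω} := by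
    ext ω
    simp only [Set.mem_setOf_eq]
    rw [hord m ω]
    have hiff := ord_iff (fun i => T i ω) m (t : ℝ≥0∞) ENNReal.coe_ne_top
    rw [hiff]
    have hTt : ∀ i, ((t : ℝ≥0∞) < T i ω) ↔ S t ω < ε i ω := fun i => by
      rw [hT i ω]
      exact upcross (fun u => S u ω) (hSmono ω) (hSrc ω) (ε i ω) t
    have hcard : (Finset.univ.filter (fun i => T i ω ≤ (t : ℝ≥0∞))).card = n - N ω := by
      have hfilter : Finset.univ.filter (fun i => T i ω ≤ (t : ℝ≥0∞))
          = Finset.univ.filter (fun i => ¬ (S t ω < ε i ω)) :=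
        Finset.filter_congr fun i _ => by rw [← hTt i, not_lt]
      rw [hfilter, Finset.filter_not, Finset.card_sdiff_of_subset (Finset.filter_subset _ _),
        Finset.card_univ, Fintype.card_fin]
    show (Finset.univ.filter (fun i => T i ω ≤ (t : ℝ≥0∞))).card < m ↔ r ≤ N ω
    rw [hcard, hrdef]
    have := hNn ω
    omega
  -- measurability
  have hNmeas : Measurable N := by
    have : N = fun ω => ∑ i : Fin n, (if S t ω < ε i ω then 1 else 0) := by
      funext ω
      rw [hNdef]
      exact Finset.card_filter _ _
    rw [this]
    exact Finset.measurable_sum _ fun i _ =>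
      Measurable.ite (hBmeas i) measurable_const measurable_const
  have hEmeas : MeasurableSet {ω | r ≤ N ω} := by
    have : {ω | r ≤ N ω} = N ⁻¹' {x | r ≤ x} := rfl
    rw [this]
    exact hNmeas trivial
  -- independence of the trigger vector from S t
  have hindepf : IndepFun (fun ω (i : Fin n) => ε i ω) (S t) μ := by
    rw [IndepFun_iff_Indep]
    refine indep_of_indep_of_le_right (indep_of_indep_of_le_left hindep ?_) ?_
    · have hpi : (MeasurableSpace.pi : MeasurableSpace (Fin n → ℝ))
          = ⨆ i, MeasurableSpace.comap (fun x : Fin n → ℝ => x i) inferInstance := rfl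
      rw [hpi, MeasurableSpace.comap_iSup]
      refine iSup_le fun i => ?_
      rw [MeasurableSpace.comap_comp]
      exact le_iSup (fun i => MeasurableSpace.comap (ε i) inferInstance) i
    · exact le_iSup (fun u : ℝ≥0 => MeasurableSpace.comap (fun ω => S u ω) inferInstance) t
  -- value of μ on intersections
  have hμK : ∀ k ∈ Finset.Icc r n, ∀ K ∈ Finset.powersetCard k (Finset.univ : Finset (Fin n)),
      μ (⋂ i ∈ K, B i) = ENNReal.ofReal (Real.exp (-(ψ k * t))) := by
    intro k hk K hK
    simp only [Finset.mem_Icc] at hk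
    rw [Finset.mem_powersetCard] at hK
    have hkpos : (0:ℝ) < (k:ℝ) := by
      have : 1 ≤ k := le_trans hr1 hk.1
      exact_mod_cast this
    have hstep := stepA μ n (S t) (hSmeas t) hSpos ε hεmeas hεdist hεiid hindepf K
    rw [hK.2] at hstep
    have hmeasint : Measurable fun ω => Real.exp (-((k:ℝ) * S t ω)) :=
      Real.measurable_exp.comp (((hSmeas t).const_mul (k:ℝ)).neg)
    have hint : Integrable (fun ω => Real.exp (-((k:ℝ) * S t ω))) μ := by
      refine (integrable_const (1:ℝ)).mono' hmeasint.aestronglyMeasurable ?_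
      refine ae_of_all _ fun ω => ?_
      rw [Real.norm_eq_abs, abs_of_nonneg (Real.exp_nonneg _)]
      refine Real.exp_le_one_iff.mpr ?_
      have := hSpos ω
      nlinarith
    rw [hstep, ← MeasureTheory.ofReal_integral_eq_lintegral_ofReal hint
      (ae_of_all _ fun ω => Real.exp_nonneg _), hψ t (k:ℝ) hkpos, mul_comm (t:ℝ) (ψ (k:ℝ))]
  set E := {ω | r ≤ N ω} with hEdef
  have hAmeas : ∀ K : Finset (Fin n), MeasurableSet (⋂ i ∈ K, B i) := fun K =>
    MeasurableSet.biInter K.countable_toSet fun i _ => hBmeas i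
  have hFK : ∀ K : Finset (Fin n), (fun ω => ∏ i ∈ K, (if S t ω < ε i ω then (1:ℝ) else 0))
      = (⋂ i ∈ K, B i).indicator (fun _ => (1:ℝ)) := by
    intro K
    funext ω
    by_cases h : ω ∈ ⋂ i ∈ K, B i
    · rw [Set.indicator_of_mem h]
      simp only [Set.mem_iInter, hBdef, Set.mem_setOf_eq] at h
      exact Finset.prod_eq_one fun i hi => if_pos (h i hi)
    · rw [Set.indicator_of_notMem h]
      simp only [Set.mem_iInter, hBdef, Set.mem_setOf_eq, not_forall] at h
      obtain ⟨i, hi, hbi⟩ := h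
      exact Finset.prod_eq_zero hi (if_neg hbi)
  have hFKint : ∀ K : Finset (Fin n),
      Integrable ((⋂ i ∈ K, B i).indicator (fun _ => (1:ℝ))) μ :=
    fun K => (integrable_const (1:ℝ)).indicator (hAmeas K)
  have hmain : (μ E).toReal = ∑ k ∈ Finset.Icc r n,
      ((-1:ℝ)^(k+r) * (((k-1).choose (r-1) : ℕ) : ℝ))
        * ((n.choose k : ℝ) * Real.exp (-(ψ k * t))) := by
    have hlhs : ∫ ω, E.indicator (fun _ => (1:ℝ)) ω ∂μ = (μ E).toReal := by
      rw [MeasureTheory.integral_indicator_const (1:ℝ) hEmeas]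
      simp [measureReal_def]
    rw [← hlhs]
    have hpoint : E.indicator (fun _ => (1:ℝ))
        = fun ω => ∑ k ∈ Finset.Icc r n, ((-1:ℝ)^(k+r) * (((k-1).choose (r-1) : ℕ) : ℝ)) *
            ∑ K ∈ Finset.powersetCard k (Finset.univ : Finset (Fin n)),
              (⋂ i ∈ K, B i).indicator (fun _ => (1:ℝ)) ω := by
      funext ω
      have hid := indicator_identity (fun i => S t ω < ε i ω) r hr1 hrn
      have h2 : E.indicator (fun _ => (1:ℝ)) ω = (if r ≤ N ω then (1:ℝ) else 0) := by
        by_cases h : r ≤ N ω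
        · rw [if_pos h, Set.indicator_of_mem (show ω ∈ E from h)]
        · rw [if_neg h, Set.indicator_of_notMem (show ω ∉ E from h)]
      rw [h2, hid]
      refine Finset.sum_congr rfl fun k _ => ?_
      congr 1
      exact Finset.sum_congr rfl fun K _ => congrFun (hFK K) ω
    simp only [hpoint]
    rw [MeasureTheory.integral_finset_sum _ (fun k _ =>
      (MeasureTheory.integrable_finset_sum _ fun K _ => hFKint K).const_mul _)]
    refine Finset.sum_congr rfl fun k hk => ?_
    rw [MeasureTheory.integral_const_mul]
    congr 1
    rw [MeasureTheory.integral_finset_sum _ (fun K _ => hFKint K)]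
    have : ∀ K ∈ Finset.powersetCard k (Finset.univ : Finset (Fin n)),
        ∫ ω, (⋂ i ∈ K, B i).indicator (fun _ => (1:ℝ)) ω ∂μ
          = Real.exp (-(ψ k * t)) := by
      intro K hK
      rw [MeasureTheory.integral_indicator_const (1:ℝ) (hAmeas K), measureReal_def, hμK k hk K hK,
        ENNReal.toReal_ofReal (Real.exp_nonneg _), smul_eq_mul, mul_one]
    rw [Finset.sum_congr rfl this, Finset.sum_const, Finset.card_powersetCard,
      Finset.card_univ, Fintype.card_fin, nsmul_eq_mul]
  rw [hset]
  have hfin : μ E = ENNReal.ofReal ((μ E).toReal) :=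
    (ENNReal.ofReal_toReal (measure_ne_top μ E)).symm
  rw [show μ {ω | r ≤ N ω} = μ E from rfl, hfin, hmain]
  congr 1
  refine Finset.sum_congr rfl fun k hk => ?_
  simp only [Finset.mem_Icc] at hk
  have hsign : (-1:ℝ)^(k + m - 1 - n) = (-1:ℝ)^(k+r) :=
    neg_one_pow_congr_nat _ _ (by omega)
  rw [show r - 1 = n - m from by omega, hsign]
  ring
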